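/- Let f be a submodular function on a finite ground set N, let X ⊆ Y ⊆ N, u ∈ Y \ X, and S ⊆ N. Set a = f(X ∪ {u}) − f(X), b = f(Y \ {u}) − f(Y), O = (S ∪ X) ∩ Y, and define p = 1 if b ≤ 0, p = 0 if b > 0 and a ≤ 0, and p = a/(a+b) otherwise. Then for every α ∈ [0, 1/2]: (α/2)·p·a + (1 − 3α/2)·(1 − p)·b ≥ α·[ p·(f(O) − f(O ∪ {u})) + (1 − p)·(f(O) − f(O \ {u})) ]. -/

import Mathlib

/-- **One step of randomized Double Greedy.**
For a submodular `f`, sets `X ⊆ Y`, an element `u ∈ Y \ X`, and any `S`, with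
`a = f (X ∪ {u}) − f X`, `b = f (Y \ {u}) − f Y`, `O = (S ∪ X) ∩ Y`, and
`p = 1` if `b ≤ 0`, `p = 0` if `b > 0` and `a ≤ 0`, and `p = a/(a+b)` otherwise,
for every `r ∈ [0, 1/2]`:
`(r/2)·p·a + (1 − 3r/2)·(1 − p)·b ≥ r·[p·(f O − f (O ∪ {u})) + (1 − p)·(f O − f (O \ {u}))]`. -/
theorem randomized_double_greedy_step
    {α : Type*} [DecidableEq α]
    (f : Finset α → ℝ)
    (hf_sub : ∀ S T : Finset α, f (S ∪ T) + f (S ∩ T) ≤ f S + f T)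
    (X Y S : Finset α) (hXY : X ⊆ Y) (u : α) (huY : u ∈ Y) (huX : u ∉ X)
    (a b : ℝ) (ha : a = f (X ∪ {u}) - f X) (hb : b = f (Y \ {u}) - f Y)
    (O : Finset α) (hO : O = (S ∪ X) ∩ Y)
    (p : ℝ) (hp : p = if b ≤ 0 then 1 else if a ≤ 0 then 0 else a / (a + b))
    (r : ℝ) (hr0 : 0 ≤ r) (hr1 : r ≤ 1 / 2) :
    r / 2 * (p * a) + (1 - 3 * r / 2) * ((1 - p) * b) ≥
      r * (p * (f O - f (O ∪ {u})) + (1 - p) * (f O - f (O \ {u}))) := by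
  have hOY : O ⊆ Y := by rw [hO]; exact Finset.inter_subset_right
  have hXO : X ⊆ O := by
    rw [hO]
    intro x hx
    exact Finset.mem_inter.mpr ⟨Finset.mem_union_right _ hx, hXY hx⟩
  -- a + b ≥ 0
  have hab : 0 ≤ a + b := by
    have h := hf_sub (X ∪ {u}) (Y \ {u})
    have h1 : (X ∪ {u}) ∪ (Y \ {u}) = Y := by
      ext x
      have hx := @hXY x
      by_cases hxu : x = u <;> simp [hxu, huY] <;> tauto
    have h2 : (X ∪ {u}) ∩ (Y \ {u}) = X := by
      ext x
      have hx := @hXY x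
      by_cases hxu : x = u <;> simp [hxu, huX, huY] <;> tauto
    rw [h1, h2] at h
    rw [ha, hb]; linarith
  -- bounds on the marginals at O
  have hg1 : u ∉ O → f O - f (O ∪ {u}) ≤ b := by
    intro huO
    have h := hf_sub (O ∪ {u}) (Y \ {u})
    have h1 : (O ∪ {u}) ∪ (Y \ {u}) = Y := by
      ext x
      have hx := @hOY x
      by_cases hxu : x = u <;> simp [hxu, huY] <;> tauto
    have h2 : (O ∪ {u}) ∩ (Y \ {u}) = O := by
      ext x
      have hx := @hOY x
      by_cases hxu : x = u <;> simp [hxu, huO, huY] <;> tauto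
    rw [h1, h2] at h
    rw [hb]; linarith
  have hg1' : u ∈ O → f O - f (O ∪ {u}) = 0 := by
    intro huO
    have : O ∪ {u} = O := Finset.union_eq_left.mpr (by simp [huO])
    rw [this]; ring
  have hg2 : u ∈ O → f O - f (O \ {u}) ≤ a := by
    intro huO
    have h := hf_sub (X ∪ {u}) (O \ {u})
    have h1 : (X ∪ {u}) ∪ (O \ {u}) = O := by
      ext x
      have hx := @hXO x
      by_cases hxu : x = u <;> simp [hxu, huO] <;> tauto
    have h2 : (X ∪ {u}) ∩ (O \ {u}) = X := by
      ext x
      have hx := @hXO x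
      by_cases hxu : x = u <;> simp [hxu, huX] <;> tauto
    rw [h1, h2] at h
    rw [ha]; linarith
  have hg2' : u ∉ O → f O - f (O \ {u}) = 0 := by
    intro huO
    have : O \ {u} = O := by
      ext x
      by_cases hxu : x = u <;> simp [hxu, huO]
    rw [this]; ring
  by_cases hb0 : b ≤ 0
  · -- p = 1
    have hp1 : p = 1 := by rw [hp, if_pos hb0]
    subst hp1
    have ha0 : 0 ≤ a := by linarith
    by_cases huO : u ∈ O
    · have := hg1' huO
      nlinarith [mul_nonneg hr0 ha0]
    · have h1 := hg1 huO
      nlinarith [mul_nonneg hr0 ha0, mul_nonpos_of_nonneg_of_nonpos hr0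
        (by linarith : f O - f (O ∪ {u}) ≤ 0)]
  · push_neg at hb0
    have hrq : 1 - 3 * r / 2 ≥ 1 / 4 := by linarith
    by_cases ha0 : a ≤ 0
    · -- p = 0
      have hp0 : p = 0 := by rw [hp, if_neg (by linarith), if_pos ha0]
      subst hp0
      by_cases huO : u ∈ O
      · have h2 := hg2 huO
        nlinarith [mul_nonpos_of_nonneg_of_nonpos hr0
          (by linarith : f O - f (O \ {u}) ≤ 0)]
      · have h2 := hg2' huO
        nlinarith
    · push_neg at ha0
      have hs : 0 < a + b := by linarith
      have hp' : p = a / (a + b) := by rw [hp, if_neg (by linarith), if_neg (by linarith)]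
      have hq0 : 0 ≤ p := by rw [hp']; positivity
      have hq1 : p ≤ 1 := by rw [hp', div_le_one hs]; linarith
      have h1 : p * a * (a + b) = a * a := by rw [hp']; field_simp
      have h2 : (1 - p) * b * (a + b) = b * b := by rw [hp']; field_simp; ring
      have h3 : p * b * (a + b) = a * b := by rw [hp']; field_simp
      have h4 : (1 - p) * a * (a + b) = a * b := by rw [hp']; field_simp; ring
      by_cases huO : u ∈ O
      · have hg := hg1' huO
        have hg2a := hg2 huO
        have hstep : r * ((1 - p) * (f O - f (O \ {u}))) ≤ r * ((1 - p) * a) := by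
          have h := mul_le_mul_of_nonneg_left hg2a (mul_nonneg hr0 (by linarith : (0:ℝ) ≤ 1 - p))
          linarith [h]
        have key : r * ((1 - p) * a) ≤ r / 2 * (p * a) + (1 - 3 * r / 2) * ((1 - p) * b) := by
          have e1 : r * ((1 - p) * a) * (a + b) = r * (a * b) := by
            rw [show r * ((1 - p) * a) * (a + b) = r * ((1 - p) * a * (a + b)) from by ring, h4]
          have e2 : (r / 2 * (p * a) + (1 - 3 * r / 2) * ((1 - p) * b)) * (a + b)
              = r / 2 * (a * a) + (1 - 3 * r / 2) * (b * b) := by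
            rw [show (r / 2 * (p * a) + (1 - 3 * r / 2) * ((1 - p) * b)) * (a + b)
              = r / 2 * (p * a * (a + b)) + (1 - 3 * r / 2) * ((1 - p) * b * (a + b)) from by ring,
              h1, h2]
          refine (mul_le_mul_iff_of_pos_right hs).mp ?_
          rw [e1, e2]
          nlinarith [mul_nonneg hr0 (sq_nonneg (a - b)),
            mul_nonneg (by linarith : (0:ℝ) ≤ 1 - 2 * r) (sq_nonneg b)]
        rw [hg]
        calc r * (p * 0 + (1 - p) * (f O - f (O \ {u})))
            = r * ((1 - p) * (f O - f (O \ {u}))) := by ring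
          _ ≤ r * ((1 - p) * a) := hstep
          _ ≤ _ := key
      · have hg := hg2' huO
        have hg1b := hg1 huO
        have hstep : r * (p * (f O - f (O ∪ {u}))) ≤ r * (p * b) := by
          have h := mul_le_mul_of_nonneg_left hg1b (mul_nonneg hr0 hq0)
          linarith [h]
        have key : r * (p * b) ≤ r / 2 * (p * a) + (1 - 3 * r / 2) * ((1 - p) * b) := by
          have e1 : r * (p * b) * (a + b) = r * (a * b) := by
            rw [show r * (p * b) * (a + b) = r * (p * b * (a + b)) from by ring, h3]
          have e2 : (r / 2 * (p * a) + (1 - 3 * r / 2) * ((1 - p) * b)) * (a + b)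
              = r / 2 * (a * a) + (1 - 3 * r / 2) * (b * b) := by
            rw [show (r / 2 * (p * a) + (1 - 3 * r / 2) * ((1 - p) * b)) * (a + b)
              = r / 2 * (p * a * (a + b)) + (1 - 3 * r / 2) * ((1 - p) * b * (a + b)) from by ring,
              h1, h2]
          refine (mul_le_mul_iff_of_pos_right hs).mp ?_
          rw [e1, e2]
          nlinarith [mul_nonneg hr0 (sq_nonneg (a - b)),
            mul_nonneg (by linarith : (0:ℝ) ≤ 1 - 2 * r) (sq_nonneg b)]
        rw [hg]
        calc r * (p * (f O - f (O ∪ {u})) + (1 - p) * 0)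
            = r * (p * (f O - f (O ∪ {u}))) := by ring
          _ ≤ r * (p * b) := hstep
          _ ≤ _ := key
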